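/- In any EPG representation of K_{2,n} with 2-bend paths, at most 12 vertices of the n-element bipartition class realize both of their edges (to the two vertices of the 2-element class) using the same segment or two consecutive segments of their path. -/

import Mathlib

/-- A step between two grid points is a unit step (horizontal or vertical). -/
def unitStep (a b : ℤ × ℤ) : Prop :=
  (a.1 = b.1 ∧ (a.2 - b.2).natAbs = 1) ∨ (a.2 = b.2 ∧ (a.1 - b.1).natAbs = 1)

/-- A finite non-self-intersecting (in grid edges) path in the planar grid. -/
structure GridPath where
  pts : List (ℤ × ℤ)
  nonempty : pts ≠ []
  chain : pts.Chain' unitStep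
  edges_nodup : ((pts.zip pts.tail).map fun ab => Sym2.mk ab.1 ab.2).Nodup

/-- The list of steps (consecutive pairs of points) of a grid path. -/
def GridPath.steps (P : GridPath) : List ((ℤ × ℤ) × (ℤ × ℤ)) := P.pts.zip P.pts.tail

/-- The list of grid edges used by a grid path. -/
def GridPath.edges (P : GridPath) : List (Sym2 (ℤ × ℤ)) := P.steps.map fun ab => Sym2.mk ab.1 ab.2

/-- Whether a step is horizontal. -/
def stepHoriz (ab : (ℤ × ℤ) × (ℤ × ℤ)) : Bool := ab.1.2 == ab.2.2

/-- The number of bends of a grid path: positions where a horizontal edge is followed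
by a vertical one or vice versa. -/
def GridPath.bends (P : GridPath) : ℕ :=
  ((P.steps.zip P.steps.tail).filter fun st => stepHoriz st.1 != stepHoriz st.2).length

/-- An EPG representation: distinct vertices are adjacent iff their paths share a grid edge. -/
def IsEPGRep {V : Type*} (G : SimpleGraph V) (P : V → GridPath) : Prop :=
  ∀ u v : V, u ≠ v → (G.Adj u v ↔ ∃ e, e ∈ (P u).edges ∧ e ∈ (P v).edges)

/-- `G` has an EPG representation all of whose paths have at most `k` bends. -/
def HasKBendRep {V : Type*} (G : SimpleGraph V) (k : ℕ) : Prop :=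
  ∃ P : V → GridPath, IsEPGRep G P ∧ ∀ v, (P v).bends ≤ k

/-- The bend-number of a graph. -/
noncomputable def bendNumber {V : Type*} (G : SimpleGraph V) : ℕ :=
  sInf {k | HasKBendRep G k}

/-- The maximal straight segments of a grid path. -/
def GridPath.segs (P : GridPath) : List (List ((ℤ × ℤ) × (ℤ × ℤ))) :=
  P.steps.splitBy fun s t => stepHoriz s == stepHoriz t

/-- The grid edges lying on the `i`-th segment of a grid path. -/
def segEdges (P : GridPath) (i : ℕ) : List (Sym2 (ℤ × ℤ)) :=
  (P.segs.getD i []).map fun ab => Sym2.mk ab.1 ab.2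

/-- The path `Pw` realizes its edges with `Pu` and `Pv` on one common segment or on
two consecutive segments: all grid edges shared with `Pu` or `Pv` lie on two such segments. -/
def RealizesOnCloseSegments (Pw Pu Pv : GridPath) : Prop :=
  ∃ i j : ℕ, i < Pw.segs.length ∧ j < Pw.segs.length ∧ (i = j ∨ i + 1 = j ∨ j + 1 = i) ∧
    ∀ e ∈ Pw.edges, (e ∈ Pu.edges ∨ e ∈ Pv.edges) →
      (e ∈ segEdges Pw i ∨ e ∈ segEdges Pw j)

/-- uncurried form of `Sym2.mk`. -/
abbrev smk {α : Type*} (p : α × α) : Sym2 α := Sym2.mk p.1 p.2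

/-- point on line `c` (horizontal if `b`) at coordinate `x`. -/
def pt (b : Bool) (c x : ℤ) : ℤ × ℤ := if b then (x, c) else (c, x)

/-- unit grid edge on line `(b, c)` from coordinate `x` to `x+1`. -/
def Ed (b : Bool) (c x : ℤ) : Sym2 (ℤ × ℤ) := smk (pt b c x, pt b c (x + 1))

lemma pt_inj {b : Bool} {c x c' x' : ℤ} (h : pt b c x = pt b c' x') : c = c' ∧ x = x' := by
  cases b <;> simpa [pt, Prod.ext_iff, and_comm] using h

lemma pt_cross {b : Bool} {c x c' x' : ℤ} (h : pt b c x = pt (!b) c' x') :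
    x = c' ∧ c = x' := by
  cases b <;> simpa [pt, Prod.ext_iff, and_comm] using h

lemma Ed_inj {b b' : Bool} {c x c' x' : ℤ} (h : Ed b c x = Ed b' c' x') :
    b = b' ∧ c = c' ∧ x = x' := by
  cases b <;> cases b' <;>
      simp only [Ed, pt, if_true, if_false, Bool.false_eq_true, Sym2.eq_iff,
        Prod.mk.injEq] at h
  · exact ⟨rfl, by omega, by omega⟩
  · omega
  · omega
  · exact ⟨rfl, by omega, by omega⟩

/-- form of a single unit step of orientation `b`. -/
lemma step_form {s : (ℤ × ℤ) × (ℤ × ℤ)} {b : Bool} (hu : unitStep s.1 s.2)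
    (hb : stepHoriz s = b) :
    ∃ c a σ : ℤ, (σ = 1 ∨ σ = -1) ∧ s = (pt b c a, pt b c (a + σ)) := by
  rcases hu with ⟨h1, h2⟩ | ⟨h1, h2⟩
  · -- vertical step
    have hb' : b = false := by
      cases b
      · rfl
      · exfalso
        simp only [stepHoriz, beq_iff_eq] at hb
        omega
    subst hb'
    refine ⟨s.1.1, s.1.2, s.2.2 - s.1.2, by omega, ?_⟩
    simp only [pt, if_false]
    have : s.1 = (s.1.1, s.1.2) := rfl
    have : s.2 = (s.2.1, s.2.2) := rfl
    ext <;> simp <;> omega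
  · -- horizontal step
    have hb' : b = true := by
      cases b
      · exfalso
        simp only [stepHoriz] at hb
        rw [beq_eq_false_iff_ne] at hb
        exact hb h1
      · rfl
    subst hb'
    refine ⟨s.1.2, s.1.1, s.2.1 - s.1.1, by omega, ?_⟩
    simp only [pt, if_true]
    ext <;> simp <;> omega

/-- parametrization of a straight monotone run of steps. -/
theorem run_param (b : Bool) (L : List ((ℤ × ℤ) × (ℤ × ℤ)))
    (hlink : L.IsChain (fun s t => s.2 = t.1))
    (hu : ∀ s ∈ L, unitStep s.1 s.2)
    (hb : ∀ s ∈ L, stepHoriz s = b)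
    (hnd : L.IsChain (fun s t => smk s ≠ smk t)) :
    ∃ c a σ : ℤ, (σ = 1 ∨ σ = -1) ∧
      L = (List.range L.length).map
        (fun k : ℕ => (pt b c (a + σ * k), pt b c (a + σ * (k + 1)))) := by
  induction L with
  | nil => exact ⟨0, 0, 1, Or.inl rfl, by simp⟩
  | cons s L ih =>
    obtain ⟨c, a, σ, hσ, hs⟩ :=
      step_form (hu s (List.mem_cons_self)) (hb s (List.mem_cons_self))
    cases L with
    | nil =>
      refine ⟨c, a, σ, hσ, ?_⟩
      rw [hs]
      norm_num [List.range_succ]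
    | cons t L' =>
      obtain ⟨hst, hlink'⟩ := List.isChain_cons_cons.mp hlink
      obtain ⟨hst2, hnd'⟩ := List.isChain_cons_cons.mp hnd
      obtain ⟨c', a', σ', hσ', hmap⟩ := ih hlink'
        (fun x hx => hu x (List.mem_cons_of_mem _ hx))
        (fun x hx => hb x (List.mem_cons_of_mem _ hx)) hnd'
      have ht : t = (pt b c' (a' + σ' * (0 : ℕ)), pt b c' (a' + σ' * ((0 : ℕ) + 1))) := by
        have h0 := congrArg List.head? hmap
        simpa [List.range_succ_eq_map] using h0
      have hlink2 : pt b c (a + σ) = pt b c' (a' + σ' * (0 : ℕ)) := by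
        have h2 : s.2 = t.1 := hst
        rw [hs, ht] at h2
        exact h2
      obtain ⟨hcc, haa⟩ := pt_inj hlink2
      push_cast at haa
      have haa' : a' = a + σ := by omega
      by_cases hσeq : σ' = σ
      · refine ⟨c, a, σ, hσ, ?_⟩
        have hlen : (s :: t :: L').length = L'.length + 1 + 1 := by simp
        rw [hlen, List.range_succ_eq_map, List.map_cons]
        congr 1
        · rw [hs]; norm_num
        · rw [List.map_map]
          rw [hmap]
          have hlen2 : (t :: L').length = L'.length + 1 := by simp
          rw [hlen2]
          apply List.map_congr_left
          intro k _
          simp only [Function.comp_apply]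
          rw [← hcc, haa', hσeq]
          push_cast
          ring_nf
      · have hσ'' : σ' = -σ := by omega
        exfalso
        apply hst2
        rw [hs, ht, ← hcc, haa', hσ'']
        push_cast
        norm_num
        first
          | exact Sym2.eq_swap
          | skip

lemma Sym2_pt_succ {b : Bool} {c y y' : ℤ} (h : y' = y + 1) :
    smk (pt b c y, pt b c y') = Ed b c y := by rw [h]; rfl

lemma Sym2_pt_pred {b : Bool} {c y y' : ℤ} (h : y' = y - 1) :
    smk (pt b c y, pt b c y') = Ed b c y' := by
  rw [h, Ed]
  rw [show y - 1 + 1 = y by ring]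
  exact Sym2.eq_swap

/-- full description of a straight run: edges form an integer interval on a line,
with endpoint and end-edge information. -/
theorem run_desc (b : Bool) (L : List ((ℤ × ℤ) × (ℤ × ℤ)))
    (hlink : L.IsChain (fun s t => s.2 = t.1))
    (hu : ∀ s ∈ L, unitStep s.1 s.2)
    (hb : ∀ s ∈ L, stepHoriz s = b)
    (hnd : L.IsChain (fun s t => smk s ≠ smk t)) :
    ∃ c A : ℤ,
      (∀ e, e ∈ L.map smk ↔ ∃ x : ℤ, A ≤ x ∧ x < A + L.length ∧ e = Ed b c x) ∧
      (∀ h : L ≠ [],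
        ((L.head h).1 = pt b c A ∧ (L.getLast h).2 = pt b c (A + L.length)
          ∧ smk (L.head h) = Ed b c A
          ∧ smk (L.getLast h) = Ed b c (A + L.length - 1))
        ∨ ((L.head h).1 = pt b c (A + L.length) ∧ (L.getLast h).2 = pt b c A
          ∧ smk (L.head h) = Ed b c (A + L.length - 1)
          ∧ smk (L.getLast h) = Ed b c A)) := by
  obtain ⟨c, a, σ, hσ, hmap⟩ := run_param b L hlink hu hb hnd
  have hget0 : ∀ (k : ℕ) (hk : k < L.length),
      L[k] = (pt b c (a + σ * k), pt b c (a + σ * (k + 1))) := by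
    intro k hk
    rw [List.getElem_of_eq hmap hk]
    simp
  have hmem : ∀ e, e ∈ L.map smk ↔
      ∃ (k : ℕ), ∃ (_ : k < L.length), e = smk L[k] := by
    intro e
    rw [List.mem_map]
    constructor
    · rintro ⟨x, hx, rfl⟩
      obtain ⟨k, hk, rfl⟩ := List.mem_iff_getElem.mp hx
      exact ⟨k, hk, rfl⟩
    · rintro ⟨k, hk, rfl⟩
      exact ⟨L[k], List.getElem_mem _, rfl⟩
  rcases hσ with hσ | hσ <;> subst hσ
  · -- increasing
    have hget : ∀ (k : ℕ) (hk : k < L.length),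
        L[k] = (pt b c (a + k), pt b c (a + k + 1)) := by
      intro k hk
      rw [hget0 k hk]
      rw [show a + 1 * (k : ℤ) = a + k by ring, show a + 1 * ((k : ℤ) + 1) = a + k + 1 by ring]
    have hsym : ∀ (k : ℕ) (hk : k < L.length), smk L[k] = Ed b c (a + k) := by
      intro k hk
      rw [hget k hk]
      rfl
    refine ⟨c, a, ?_, ?_⟩
    · intro e
      rw [hmem]
      constructor
      · rintro ⟨k, hk, rfl⟩
        exact ⟨a + k, by omega, by omega, hsym k hk⟩
      · rintro ⟨x, hx1, hx2, rfl⟩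
        refine ⟨(x - a).toNat, by omega, ?_⟩
        rw [hsym _ (by omega)]
        congr 1
        omega
    · intro h
      have hlen : 0 < L.length := List.length_pos_iff.mpr h
      left
      refine ⟨?_, ?_, ?_, ?_⟩
      · rw [List.head_eq_getElem, hget 0 (by omega)]
        show pt b c _ = _
        congr 1
        omega
      · rw [List.getLast_eq_getElem, hget (L.length - 1) (by omega)]
        show pt b c _ = _
        congr 1
        omega
      · rw [List.head_eq_getElem, hsym 0 (by omega)]
        congr 1
        omega
      · rw [List.getLast_eq_getElem, hsym (L.length - 1) (by omega)]
        congr 1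
        omega
  · -- decreasing
    have hget : ∀ (k : ℕ) (hk : k < L.length),
        L[k] = (pt b c (a - k), pt b c (a - k - 1)) := by
      intro k hk
      rw [hget0 k hk]
      rw [show a + -1 * (k : ℤ) = a - k by ring, show a + -1 * ((k : ℤ) + 1) = a - k - 1 by ring]
    have hsym : ∀ (k : ℕ) (hk : k < L.length), smk L[k] = Ed b c (a - k - 1) := by
      intro k hk
      rw [hget k hk]
      rw [show Ed b c (a - k - 1) = smk (pt b c (a - k - 1), pt b c (a - k - 1 + 1)) from rfl]
      rw [show a - (k : ℤ) - 1 + 1 = a - k by ring]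
      exact Sym2.eq_swap
    refine ⟨c, a - L.length, ?_, ?_⟩
    · intro e
      rw [hmem]
      constructor
      · rintro ⟨k, hk, rfl⟩
        exact ⟨a - k - 1, by omega, by omega, hsym k hk⟩
      · rintro ⟨x, hx1, hx2, rfl⟩
        refine ⟨(a - 1 - x).toNat, by omega, ?_⟩
        rw [hsym _ (by omega)]
        congr 1
        omega
    · intro h
      have hlen : 0 < L.length := List.length_pos_iff.mpr h
      right
      refine ⟨?_, ?_, ?_, ?_⟩
      · rw [List.head_eq_getElem, hget 0 (by omega)]
        show pt b c _ = _
        congr 1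
        omega
      · rw [List.getLast_eq_getElem, hget (L.length - 1) (by omega)]
        show pt b c _ = _
        congr 1
        omega
      · rw [List.head_eq_getElem, hsym 0 (by omega)]
        congr 1
        omega
      · rw [List.getLast_eq_getElem, hsym (L.length - 1) (by omega)]
        congr 1
        omega

section PathInfra

variable {α β : Type*}

lemma zip_tail_chain' : ∀ (l : List α), (l.zip l.tail).IsChain (fun s t => s.2 = t.1)
  | [] => by simp
  | [_] => by simp
  | a :: b :: l => by
    have ih := zip_tail_chain' (b :: l)
    simp only [List.tail_cons, List.zip_cons_cons] at *
    cases l with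
    | nil => simp
    | cons c l' => exact List.isChain_cons_cons.mpr ⟨rfl, ih⟩

lemma mem_zip_tail {R : α → α → Prop} :
    ∀ {l : List α}, l.IsChain R → ∀ s ∈ l.zip l.tail, R s.1 s.2
  | [], _, s, hs => by simp at hs
  | [_], _, s, hs => by simp at hs
  | a :: b :: l, h, s, hs => by
    simp only [List.tail_cons, List.zip_cons_cons, List.mem_cons] at hs
    rcases hs with rfl | hs
    · exact (List.isChain_cons_cons.mp h).1
    · exact mem_zip_tail (List.isChain_cons_cons.mp h).2 s hs

lemma chain_beq_head {f : α → β} [BEq β] [LawfulBEq β] :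
    ∀ {l : List α}, l.IsChain (fun x y => f x == f y) → ∀ x ∈ l, ∀ h : l ≠ [],
      f x = f (l.head h)
  | [], _, x, hx, h => by simp at hx
  | a :: l, hc, x, hx, h => by
    rcases List.mem_cons.mp hx with rfl | hx
    · rfl
    · have hl : l ≠ [] := List.ne_nil_of_mem hx
      have h1 : f x = f (l.head hl) := chain_beq_head hc.tail x hx hl
      have h2 : f a = f (l.head hl) := by
        have := (List.isChain_cons.mp hc).1 (l.head hl) (List.head?_eq_head hl)
        exact eq_of_beq this
      simp only [List.head_cons]
      rw [h1, ← h2]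

end PathInfra

namespace GridPath

variable (Q : GridPath)

lemma steps_chain : Q.steps.IsChain (fun s t => s.2 = t.1) := zip_tail_chain' _

lemma steps_unit : ∀ s ∈ Q.steps, unitStep s.1 s.2 := mem_zip_tail Q.chain

lemma edges_def : Q.edges = Q.steps.map smk := rfl

lemma edges_nodup' : Q.edges.Nodup := Q.edges_nodup

lemma segs_flatten : Q.segs.flatten = Q.steps := List.flatten_splitBy _ _

/-- edges of the path are the union of the segment edges -/
lemma mem_edges_iff {e : Sym2 (ℤ × ℤ)} :
    e ∈ Q.edges ↔ ∃ i, ∃ (_ : i < Q.segs.length), e ∈ segEdges Q i := by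
  rw [edges_def, ← Q.segs_flatten, List.map_flatten, List.mem_flatten]
  constructor
  · rintro ⟨l, hl, he⟩
    obtain ⟨gl, hgl, rfl⟩ := List.mem_map.mp hl
    obtain ⟨i, hi, rfl⟩ := List.mem_iff_getElem.mp hgl
    refine ⟨i, hi, ?_⟩
    rw [segEdges, List.getD_eq_getElem _ _ hi]
    exact he
  · rintro ⟨i, hi, he⟩
    rw [segEdges, List.getD_eq_getElem _ _ hi] at he
    exact ⟨(Q.segs[i]).map smk, List.mem_map_of_mem (List.getElem_mem hi), he⟩

/-- full description of segment `i` of a grid path -/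
lemma seg_desc (i : ℕ) (hi : i < Q.segs.length) :
    ∃ (b : Bool) (c A : ℤ), (∀ s ∈ Q.segs[i], stepHoriz s = b) ∧ 0 < (Q.segs[i]).length ∧
      (∀ e, e ∈ segEdges Q i ↔
        ∃ x : ℤ, A ≤ x ∧ x < A + (Q.segs[i]).length ∧ e = Ed b c x) ∧
      (∀ h : Q.segs[i] ≠ [],
        (((Q.segs[i]).head h).1 = pt b c A
          ∧ ((Q.segs[i]).getLast h).2 = pt b c (A + (Q.segs[i]).length)
          ∧ smk ((Q.segs[i]).head h) = Ed b c A
          ∧ smk ((Q.segs[i]).getLast h) = Ed b c (A + (Q.segs[i]).length - 1))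
        ∨ (((Q.segs[i]).head h).1 = pt b c (A + (Q.segs[i]).length)
          ∧ ((Q.segs[i]).getLast h).2 = pt b c A
          ∧ smk ((Q.segs[i]).head h) = Ed b c (A + (Q.segs[i]).length - 1)
          ∧ smk ((Q.segs[i]).getLast h) = Ed b c A)) := by
  set g := Q.segs[i] with hg
  have hmem : g ∈ Q.segs := List.getElem_mem hi
  have hne : g ≠ [] := List.ne_nil_of_mem_splitBy hmem
  have hinf : g <:+: Q.steps := by
    rw [← Q.segs_flatten]
    exact List.infix_of_mem_flatten hmem
  have hlink : g.IsChain (fun s t => s.2 = t.1) := Q.steps_chain.infix hinf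
  have hu : ∀ s ∈ g, unitStep s.1 s.2 := fun s hs => Q.steps_unit s (hinf.mem hs)
  have horient := List.isChain_of_mem_splitBy hmem
  have hb : ∀ s ∈ g, stepHoriz s = stepHoriz (g.head hne) :=
    fun s hs => chain_beq_head horient s hs hne
  have hndsub : (g.map smk).Sublist Q.edges := by
    rw [edges_def]
    exact (hinf.map _).sublist
  have hnd : g.IsChain (fun s t => smk s ≠ smk t) := by
    have : (g.map smk).Nodup := hndsub.nodup Q.edges_nodup'
    have hpw : g.Pairwise (fun s t => smk s ≠ smk t) := List.pairwise_map.mp this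
    exact hpw.isChain
  obtain ⟨c, A, h1, h2⟩ := run_desc (stepHoriz (g.head hne)) g hlink hu hb hnd
  refine ⟨stepHoriz (g.head hne), c, A, hb, List.length_pos_iff.mpr hne, ?_, h2⟩
  intro e
  rw [segEdges, List.getD_eq_getElem _ _ hi, ← hg]
  exact h1 e

end GridPath



section Cnt

/-- number of bends in a list of steps -/
def cnt (l : List ((ℤ × ℤ) × (ℤ × ℤ))) : ℕ :=
  ((l.zip l.tail).filter fun st => stepHoriz st.1 != stepHoriz st.2).length

lemma cnt_cons2 (s t : (ℤ × ℤ) × (ℤ × ℤ)) (l : List ((ℤ × ℤ) × (ℤ × ℤ))) :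
    cnt (s :: t :: l) = (if stepHoriz s != stepHoriz t then 1 else 0) + cnt (t :: l) := by
  simp only [cnt, List.tail_cons, List.zip_cons_cons, List.filter_cons]
  split <;> simp <;> omega

lemma cnt_append_ge :
    ∀ (g l : List ((ℤ × ℤ) × (ℤ × ℤ))) (hg : g ≠ []) (hl : l ≠ [])
      (_ : stepHoriz (g.getLast hg) ≠ stepHoriz (l.head hl)),
      cnt l + 1 ≤ cnt (g ++ l)
  | [], _, hg, _, _ => absurd rfl hg
  | [s], l, _, hl, hb => by
    obtain ⟨h, t, rfl⟩ := List.exists_cons_of_ne_nil hl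
    rw [List.singleton_append, cnt_cons2]
    have : stepHoriz s ≠ stepHoriz h := by simpa using hb
    simp [this]
  | s :: x :: g'', l, _, hl, hb => by
    have hg' : (x :: g'') ≠ [] := List.cons_ne_nil _ _
    have hb' : stepHoriz ((x :: g'').getLast hg') ≠ stepHoriz (l.head hl) := by
      rwa [List.getLast_cons hg'] at hb
    have ih := cnt_append_ge (x :: g'') l hg' hl hb'
    have : cnt ((s :: x :: g'') ++ l) = (if stepHoriz s != stepHoriz x then 1 else 0)
        + cnt ((x :: g'') ++ l) := by
      rw [List.cons_append, List.cons_append, cnt_cons2]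
    omega

lemma groups_le :
    ∀ (gs : List (List ((ℤ × ℤ) × (ℤ × ℤ)))), (∀ g ∈ gs, g ≠ []) →
      gs.IsChain (fun g g' => ∀ (h1 : g ≠ []) (h2 : g' ≠ []),
        stepHoriz (g.getLast h1) ≠ stepHoriz (g'.head h2)) →
      gs.length ≤ cnt gs.flatten + 1
  | [], _, _ => by simp
  | [g], _, _ => by simp
  | g :: g' :: gs', hne, hch => by
    have hg : g ≠ [] := hne g (by simp)
    have hg' : g' ≠ [] := hne g' (by simp)
    have ih := groups_le (g' :: gs') (fun x hx => hne x (List.mem_cons_of_mem _ hx))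
      (List.isChain_cons_cons.mp hch).2
    have hfl : (g' :: gs').flatten ≠ [] := by
      simp only [List.flatten_cons]
      exact fun h => hg' (List.append_eq_nil_iff.mp h).1
    have hhead : (g' :: gs').flatten.head hfl = g'.head hg' := by
      simp only [List.flatten_cons]
      exact List.head_append_of_ne_nil _
    have hb : stepHoriz (g.getLast hg) ≠ stepHoriz ((g' :: gs').flatten.head hfl) := by
      rw [hhead]
      exact (List.isChain_cons_cons.mp hch).1 hg hg'
    have key := cnt_append_ge g ((g' :: gs').flatten) hg hfl hb
    have : (g :: g' :: gs').flatten = g ++ (g' :: gs').flatten := by simp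
    rw [this]
    simp only [List.length_cons] at *
    omega

end Cnt

lemma GridPath.segs_length_le (Q : GridPath) : Q.segs.length ≤ Q.bends + 1 := by
  have h1 : ∀ g ∈ Q.segs, g ≠ [] := fun g hg => List.ne_nil_of_mem_splitBy hg
  have h2 : Q.segs.IsChain (fun g g' => ∀ (h1 : g ≠ []) (h2 : g' ≠ []),
      stepHoriz (g.getLast h1) ≠ stepHoriz (g'.head h2)) := by
    have := List.isChain_getLast_head_splitBy (fun s t => stepHoriz s == stepHoriz t) Q.steps
    apply this.imp
    intro g g' h hh1 hh2
    obtain ⟨ha, hb, hr⟩ := h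
    intro heq
    rw [heq] at hr
    simp at hr
  have h3 := groups_le Q.segs h1 h2
  rw [Q.segs_flatten] at h3
  have : cnt Q.steps = Q.bends := rfl
  omega



/-- coordinate of a point along a line of orientation `b` -/
def crd (b : Bool) (p : ℤ × ℤ) : ℤ := if b then p.1 else p.2

lemma crd_pt (b : Bool) (c x : ℤ) : crd b (pt b c x) = x := by
  cases b <;> simp [crd, pt]

lemma flatten_chain_adj {α : Type*} {R : α → α → Prop} :
    ∀ (gs : List (List α)), gs.flatten.IsChain R → (∀ g ∈ gs, g ≠ []) →
      ∀ i (hi : i + 1 < gs.length) (h1 : gs[i]'(by omega) ≠ []) (h2 : gs[i+1]'hi ≠ []),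
        R ((gs[i]'(by omega)).getLast h1) ((gs[i+1]'hi).head h2)
  | [], _, _, i, hi => by simp at hi
  | [g], _, _, i, hi => by simp at hi
  | g :: g' :: gs', hch, hne, i, hi => by
    have hflat : (g :: g' :: gs').flatten = g ++ (g' :: gs').flatten := by simp
    rw [hflat] at hch
    obtain ⟨hc1, hc2, hc3⟩ := List.isChain_append.mp hch
    cases i with
    | zero =>
      intro h1 h2
      simp only [List.getElem_cons_zero, List.getElem_cons_succ] at *
      have hg' : g' ≠ [] := hne g' (by simp)
      apply hc3
      · exact List.getLast?_eq_getLast _ ▸ rfl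
      · have : (g' :: gs').flatten.head? = some (g'.head hg') := by
          simp only [List.flatten_cons]
          rw [List.head?_append_of_ne_nil _ hg']
          exact List.head?_eq_head hg'
        rw [this]
        rfl
    | succ i =>
      intro h1 h2
      have := flatten_chain_adj (g' :: gs') hc2
        (fun x hx => hne x (List.mem_cons_of_mem _ hx)) i (by simpa using hi)
      simp only [List.getElem_cons_succ] at *
      exact this h1 h2

/-- data for segment `i` of a path. -/
def SegDat (Q : GridPath) (i : ℕ) (b : Bool) (c A : ℤ) : Prop :=
  ∃ (hi : i < Q.segs.length),
    (∀ s ∈ Q.segs[i], stepHoriz s = b) ∧ 0 < (Q.segs[i]).length ∧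
    (∀ e, e ∈ segEdges Q i ↔
        ∃ x : ℤ, A ≤ x ∧ x < A + (Q.segs[i]).length ∧ e = Ed b c x) ∧
    (∀ h : Q.segs[i] ≠ [],
        (((Q.segs[i]).head h).1 = pt b c A
          ∧ ((Q.segs[i]).getLast h).2 = pt b c (A + (Q.segs[i]).length)
          ∧ smk ((Q.segs[i]).head h) = Ed b c A
          ∧ smk ((Q.segs[i]).getLast h) = Ed b c (A + (Q.segs[i]).length - 1))
        ∨ (((Q.segs[i]).head h).1 = pt b c (A + (Q.segs[i]).length)
          ∧ ((Q.segs[i]).getLast h).2 = pt b c A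
          ∧ smk ((Q.segs[i]).head h) = Ed b c (A + (Q.segs[i]).length - 1)
          ∧ smk ((Q.segs[i]).getLast h) = Ed b c A))

lemma segDat_exists (Q : GridPath) (i : ℕ) (hi : i < Q.segs.length) :
    ∃ b c A, SegDat Q i b c A := by
  obtain ⟨b, c, A, h⟩ := Q.seg_desc i hi
  exact ⟨b, c, A, hi, h⟩

lemma segDat_ne_nil {Q : GridPath} {i b c A} (h : SegDat Q i b c A) :
    ∃ (hi : i < Q.segs.length), Q.segs[i] ≠ [] := by
  obtain ⟨hi, _, hpos, _⟩ := h
  exact ⟨hi, by rw [← List.length_pos_iff]; exact hpos⟩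

/-- an edge of segment `i` is an edge of the path -/
lemma segEdges_subset {Q : GridPath} {i : ℕ} (hi : i < Q.segs.length) {e} 
    (he : e ∈ segEdges Q i) : e ∈ Q.edges :=
  Q.mem_edges_iff.mpr ⟨i, hi, he⟩

lemma mem_segEdges_of_mem {Q : GridPath} {i : ℕ} (hi : i < Q.segs.length)
    {s} (hs : s ∈ Q.segs[i]) : smk s ∈ segEdges Q i := by
  rw [segEdges, List.getD_eq_getElem _ _ hi]
  exact List.mem_map_of_mem hs

/-- facts about an adjacent pair of segments -/
lemma pair_facts {Q : GridPath} {i : ℕ} {b c A b' c' A'}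
    (h : SegDat Q i b c A) (h' : SegDat Q (i+1) b' c' A') :
    b' = !b ∧
    (Ed b c c' ∈ Q.edges ∨ Ed b c (c' - 1) ∈ Q.edges) ∧
    (Ed b' c' c ∈ Q.edges ∨ Ed b' c' (c - 1) ∈ Q.edges) ∧
    (∀ (hi' : i + 1 < Q.segs.length) (h2 : Q.segs[i+1] ≠ []),
        c = crd b' ((Q.segs[i+1]).head h2).1) ∧
    (∀ (hi : i < Q.segs.length) (h1 : Q.segs[i] ≠ []),
        c' = crd b ((Q.segs[i]).getLast h1).2) := by
  obtain ⟨hi1, hne1⟩ := segDat_ne_nil h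
  obtain ⟨hi2, hne2⟩ := segDat_ne_nil h'
  obtain ⟨hi1', hb1, hpos1, hiff1, hend1⟩ := h
  obtain ⟨hi2', hb2, hpos2, hiff2, hend2⟩ := h'
  -- corner link
  have hlink : ((Q.segs[i]).getLast hne1).2 = ((Q.segs[i+1]).head hne2).1 := by
    have := flatten_chain_adj Q.segs (by rw [Q.segs_flatten]; exact Q.steps_chain)
      (fun g hg => List.ne_nil_of_mem_splitBy hg) i hi2 hne1 hne2
    exact this
  -- orientations differ
  have horient : b' = !b := by
    have hch := List.isChain_getLast_head_splitBy
      (fun s t => stepHoriz s == stepHoriz t) Q.steps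
    rw [List.isChain_iff_getElem] at hch
    have hrel := hch i (by
      show i + 1 < (List.splitBy _ Q.steps).length
      have : Q.segs.length = (List.splitBy (fun s t => stepHoriz s == stepHoriz t) Q.steps).length := rfl
      omega)
    obtain ⟨ha, hb, hfalse⟩ := hrel
    have e1 : stepHoriz ((Q.segs[i]).getLast hne1) = b :=
      hb1 _ (List.getLast_mem hne1)
    have e2 : stepHoriz ((Q.segs[i+1]).head hne2) = b' :=
      hb2 _ (List.head_mem hne2)
    have : (stepHoriz ((Q.segs[i]).getLast hne1) ==
        stepHoriz ((Q.segs[i+1]).head hne2)) = false := by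
      convert hfalse using 2 <;> simp [GridPath.segs] <;> congr 1
    rw [e1, e2] at this
    cases b <;> cases b' <;> simp_all
  -- endpoint cases
  have hcross : ∀ s t : ℤ, pt b c s = pt b' c' t → s = c' ∧ c = t := by
    intro s t hpt
    rw [horient] at hpt
    exact pt_cross hpt
  have hmem_last : smk ((Q.segs[i]).getLast hne1) ∈ Q.edges :=
    segEdges_subset hi1 (mem_segEdges_of_mem hi1 (List.getLast_mem hne1))
  have hmem_head : smk ((Q.segs[i+1]).head hne2) ∈ Q.edges :=
    segEdges_subset hi2 (mem_segEdges_of_mem hi2 (List.head_mem hne2))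
  refine ⟨horient, ?_, ?_, ?_, ?_⟩
  · -- end edge of seg i at the corner
    rcases hend1 hne1 with ⟨-, hq, -, hsym⟩ | ⟨-, hq, -, hsym⟩ <;>
      rcases hend2 hne2 with ⟨hq', -, -, -⟩ | ⟨hq', -, -, -⟩ <;>
      [(obtain ⟨hs, -⟩ := hcross _ _ (hq.symm ▸ hq' ▸ hlink));
       (obtain ⟨hs, -⟩ := hcross _ _ (hq.symm ▸ hq' ▸ hlink));
       (obtain ⟨hs, -⟩ := hcross _ _ (hq.symm ▸ hq' ▸ hlink));
       (obtain ⟨hs, -⟩ := hcross _ _ (hq.symm ▸ hq' ▸ hlink))] <;>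
      [right; right; left; left] <;>
      rw [← hs] at * <;>
      [(rw [show A + ((Q.segs[i]).length : ℤ) - 1 = A + (Q.segs[i]).length - 1 by ring] at hsym);
       skip; skip; skip] <;>
      first
        | (rw [← hsym]; exact hmem_last)
        | (convert hmem_last using 2; omega)
  · -- end edge of seg i+1 at the corner
    rcases hend2 hne2 with ⟨hq', -, hsym', -⟩ | ⟨hq', -, hsym', -⟩ <;>
      rcases hend1 hne1 with ⟨-, hq, -, -⟩ | ⟨-, hq, -, -⟩ <;>
      obtain ⟨-, hct⟩ := hcross _ _ (hq.symm ▸ hq' ▸ hlink) <;>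
      [left; left; right; right] <;>
      first
        | (rw [hct, ← hsym']; exact hmem_head)
        | (rw [← hsym']; convert hmem_head using 2; omega)
        | (convert hmem_head using 2; omega)
  · intro hi' h2
    rcases hend2 h2 with ⟨hq', -, -, -⟩ | ⟨hq', -, -, -⟩ <;>
      rcases hend1 hne1 with ⟨-, hq, -, -⟩ | ⟨-, hq, -, -⟩ <;>
      · have hlk : ((Q.segs[i]).getLast hne1).2 = ((Q.segs[i+1]).head h2).1 := hlink
        obtain ⟨-, hct⟩ := hcross _ _ (hq.symm ▸ hq' ▸ hlk)
        rw [hct, hq', crd_pt]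
  · intro hi0 h1
    rcases hend2 hne2 with ⟨hq', -, -, -⟩ | ⟨hq', -, -, -⟩ <;>
      rcases hend1 h1 with ⟨-, hq, -, -⟩ | ⟨-, hq, -, -⟩ <;>
      · have hlk : ((Q.segs[i]).getLast h1).2 = ((Q.segs[i+1]).head hne2).1 := hlink
        obtain ⟨hs, -⟩ := hcross _ _ (hq.symm ▸ hq' ▸ hlk)
        rw [← hs, hq, crd_pt]


lemma head_last_crd {Q : GridPath} {i b c A} (h : SegDat Q i b c A)
    (hi : i < Q.segs.length) (h1 : Q.segs[i] ≠ []) :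
    crd b ((Q.segs[i]).head h1).1 ≠ crd b ((Q.segs[i]).getLast h1).2 := by
  obtain ⟨hi', hb1, hpos, hiff, hend⟩ := h
  have hlen : (0 : ℤ) < ((Q.segs[i]).length : ℤ) := by exact_mod_cast hpos
  rcases hend h1 with ⟨e1, e2, -, -⟩ | ⟨e1, e2, -, -⟩ <;> rw [e1, e2, crd_pt, crd_pt] <;> omega

/-- block data for a whole path: orientation, line, and edge interval of each segment,
together with corner and distinctness information. -/
def BlocksFor (Q : GridPath) (L : List (Bool × ℤ × ℤ × ℤ)) : Prop :=
  L.length = Q.segs.length ∧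
  (∀ (i : ℕ) (hi : i < L.length), (L[i]).2.2.1 < (L[i]).2.2.2 ∧
      ∀ e, (e ∈ segEdges Q i ↔
        ∃ x, (L[i]).2.2.1 ≤ x ∧ x < (L[i]).2.2.2 ∧ e = Ed (L[i]).1 (L[i]).2.1 x)) ∧
  (∀ (i : ℕ) (hi : i + 1 < L.length), (L[i+1]).1 = !(L[i]'(by omega)).1 ∧
      (Ed (L[i]'(by omega)).1 (L[i]'(by omega)).2.1 ((L[i+1]).2.1) ∈ Q.edges ∨
        Ed (L[i]'(by omega)).1 (L[i]'(by omega)).2.1 ((L[i+1]).2.1 - 1) ∈ Q.edges) ∧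
      (Ed (L[i+1]).1 (L[i+1]).2.1 ((L[i]'(by omega)).2.1) ∈ Q.edges ∨
        Ed (L[i+1]).1 (L[i+1]).2.1 ((L[i]'(by omega)).2.1 - 1) ∈ Q.edges)) ∧
  (∀ (i j : ℕ) (hj : j < L.length) (hij : i < j), (L[i]'(by omega)).1 = (L[j]).1 →
      (L[i]'(by omega)).2.1 ≠ (L[j]).2.1)

theorem blocks_exist (Q : GridPath) (hbend : Q.bends ≤ 2) :
    ∃ L, BlocksFor Q L ∧ L.length ≤ 3 := by
  have hm3 : Q.segs.length ≤ 3 := by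
    have := Q.segs_length_le
    omega
  obtain ⟨m, hm⟩ : ∃ m, Q.segs.length = m := ⟨_, rfl⟩
  rw [hm] at hm3
  interval_cases m
  · exact ⟨[], ⟨hm.symm, by intro i hi; simp at hi, by intro i hi; simp at hi,
      by intro i j hj hij; simp at hj⟩, by simp⟩
  · obtain ⟨b0, c0, A0, D0⟩ := segDat_exists Q 0 (by omega)
    obtain ⟨hD0, -, hpos0, hiff0, -⟩ := D0
    refine ⟨[(b0, c0, A0, A0 + ((Q.segs[0]'(by omega)).length : ℤ))], ⟨by simpa using hm.symm, ?_, by simp, ?_⟩, by simp⟩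
    · intro i hi
      simp only [List.length_cons, List.length_nil] at hi
      interval_cases i
      simp only [List.getElem_singleton]
      constructor
      · have : (0:ℤ) < ((Q.segs[0]'(by omega)).length : ℤ) := by exact_mod_cast hpos0
        omega
      · exact hiff0
    · intro i j hj hij
      simp only [List.length_cons, List.length_nil] at hj
      omega
  · obtain ⟨b0, c0, A0, D0⟩ := segDat_exists Q 0 (by omega)
    obtain ⟨b1, c1, A1, D1⟩ := segDat_exists Q 1 (by omega)
    obtain ⟨horicomp, hch0, hch1, hcrd0, hcrd1⟩ := pair_facts D0 D1
    obtain ⟨hD0, -, hpos0, hiff0, -⟩ := D0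
    obtain ⟨hD1, -, hpos1, hiff1, -⟩ := D1
    refine ⟨[(b0, c0, A0, A0 + ((Q.segs[0]'(by omega)).length : ℤ)),
             (b1, c1, A1, A1 + ((Q.segs[1]'(by omega)).length : ℤ))],
      ⟨by simpa using hm.symm, ?_, ?_, ?_⟩, by simp⟩
    · intro i hi
      simp only [List.length_cons, List.length_nil] at hi
      interval_cases i <;> simp only [List.getElem_cons_zero, List.getElem_cons_succ,
        List.getElem_singleton] <;> constructor
      · have : (0:ℤ) < ((Q.segs[0]'(by omega)).length : ℤ) := by exact_mod_cast hpos0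
        omega
      · exact hiff0
      · have : (0:ℤ) < ((Q.segs[1]'(by omega)).length : ℤ) := by exact_mod_cast hpos1
        omega
      · exact hiff1
    · intro i hi
      simp only [List.length_cons, List.length_nil] at hi
      have hi0 : i = 0 := by omega
      subst hi0
      simp only [List.getElem_cons_zero, List.getElem_cons_succ]
      exact ⟨horicomp, hch0, hch1⟩
    · intro i j hj hij
      simp only [List.length_cons, List.length_nil] at hj
      have hij01 : i = 0 ∧ j = 1 := by omega
      obtain ⟨rfl, rfl⟩ := hij01
      simp only [List.getElem_cons_zero, List.getElem_cons_succ, List.getElem_singleton]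
      intro hbb
      rw [horicomp] at hbb
      cases b0 <;> simp at hbb
  · obtain ⟨b0, c0, A0, D0⟩ := segDat_exists Q 0 (by omega)
    obtain ⟨b1, c1, A1, D1⟩ := segDat_exists Q 1 (by omega)
    obtain ⟨b2, c2, A2, D2⟩ := segDat_exists Q 2 (by omega)
    obtain ⟨horicomp, hch0, hch1, hcrd0, hcrd1⟩ := pair_facts D0 D1
    obtain ⟨horicomp', hch0', hch1', hcrd0', hcrd1'⟩ := pair_facts D1 D2
    have hne1 : Q.segs[1]'(by omega) ≠ [] := by
      obtain ⟨hh, h⟩ := segDat_ne_nil D1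
      exact h
    have huniq : c0 ≠ c2 := by
      have e0 : c0 = crd b1 ((Q.segs[1]'(by omega)).head hne1).1 := hcrd0 (by omega) hne1
      have e2 : c2 = crd b1 ((Q.segs[1]'(by omega)).getLast hne1).2 := hcrd1' (by omega) hne1
      have := head_last_crd D1 (by omega) hne1
      rw [e0, e2]
      exact this
    obtain ⟨hD0, -, hpos0, hiff0, -⟩ := D0
    obtain ⟨hD1, -, hpos1, hiff1, -⟩ := D1
    obtain ⟨hD2, -, hpos2, hiff2, -⟩ := D2
    refine ⟨[(b0, c0, A0, A0 + ((Q.segs[0]'(by omega)).length : ℤ)),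
             (b1, c1, A1, A1 + ((Q.segs[1]'(by omega)).length : ℤ)),
             (b2, c2, A2, A2 + ((Q.segs[2]'(by omega)).length : ℤ))],
      ⟨by simpa using hm.symm, ?_, ?_, ?_⟩, by simp⟩
    · intro i hi
      simp only [List.length_cons, List.length_nil] at hi
      interval_cases i <;> simp only [List.getElem_cons_zero, List.getElem_cons_succ,
        List.getElem_singleton] <;> constructor
      · have : (0:ℤ) < ((Q.segs[0]'(by omega)).length : ℤ) := by exact_mod_cast hpos0
        omega
      · exact hiff0
      · have : (0:ℤ) < ((Q.segs[1]'(by omega)).length : ℤ) := by exact_mod_cast hpos1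
        omega
      · exact hiff1
      · have : (0:ℤ) < ((Q.segs[2]'(by omega)).length : ℤ) := by exact_mod_cast hpos2
        omega
      · exact hiff2
    · intro i hi
      simp only [List.length_cons, List.length_nil] at hi
      have hi01 : i = 0 ∨ i = 1 := by omega
      rcases hi01 with rfl | rfl <;> simp only [List.getElem_cons_zero, List.getElem_cons_succ]
      · exact ⟨horicomp, hch0, hch1⟩
      · exact ⟨horicomp', hch0', hch1'⟩
    · intro i j hj hij
      simp only [List.length_cons, List.length_nil] at hj
      have : (i = 0 ∧ j = 1) ∨ (i = 0 ∧ j = 2) ∨ (i = 1 ∧ j = 2) := by omega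
      rcases this with ⟨rfl, rfl⟩ | ⟨rfl, rfl⟩ | ⟨rfl, rfl⟩ <;>
        simp only [List.getElem_cons_zero, List.getElem_cons_succ, List.getElem_singleton]
      · intro hbb
        rw [horicomp] at hbb
        cases b0 <;> simp at hbb
      · intro _
        exact huniq
      · intro hbb
        rw [horicomp'] at hbb
        cases b1 <;> simp at hbb


/-- the finset of lines of orientation `b` among the blocks -/
def lineF (L : List (Bool × ℤ × ℤ × ℤ)) (b : Bool) : Finset ℤ :=
  ((L.filter (fun bl => bl.1 == b)).map (fun bl => bl.2.1)).toFinset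

lemma mem_lineF {L : List (Bool × ℤ × ℤ × ℤ)} {b : Bool} {c : ℤ} :
    c ∈ lineF L b ↔ ∃ i, ∃ (hi : i < L.length), (L[i]).1 = b ∧ (L[i]).2.1 = c := by
  rw [lineF, List.mem_toFinset, List.mem_map]
  constructor
  · rintro ⟨bl, hbl, rfl⟩
    rw [List.mem_filter] at hbl
    obtain ⟨i, hi, rfl⟩ := List.mem_iff_getElem.mp hbl.1
    exact ⟨i, hi, by simpa using hbl.2, rfl⟩
  · rintro ⟨i, hi, hb, rfl⟩
    exact ⟨L[i], List.mem_filter.mpr ⟨List.getElem_mem hi, by simpa using hb⟩, rfl⟩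

lemma filter_bool_length {α : Type*} (L : List α) (p : α → Bool) :
    (L.filter p).length + (L.filter (fun a => !(p a))).length = L.length := by
  induction L with
  | nil => simp
  | cons a l ih =>
    cases h : p a <;> simp [List.filter_cons, h] <;> omega

lemma lineF_card_sum {L : List (Bool × ℤ × ℤ × ℤ)} :
    (lineF L true).card + (lineF L false).card ≤ L.length := by
  have h1 : (lineF L true).card ≤ (L.filter (fun bl => bl.1 == true)).length := by
    refine le_trans (List.toFinset_card_le _) ?_
    rw [List.length_map]
  have h2 : (lineF L false).card ≤ (L.filter (fun bl => bl.1 == false)).length := by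
    refine le_trans (List.toFinset_card_le _) ?_
    rw [List.length_map]
  have h3 := filter_bool_length L (fun bl => bl.1 == true)
  have h4 : (L.filter (fun bl => !(bl.1 == true))).length
      = (L.filter (fun bl => bl.1 == false)).length := by
    congr 1
    apply List.filter_congr
    intro x _
    cases hx : x.1 <;> simp
  omega

lemma lineF_card_le_two {Q : GridPath} {L : List (Bool × ℤ × ℤ × ℤ)}
    (hL : BlocksFor Q L) (h3 : L.length ≤ 3) (b : Bool) : (lineF L b).card ≤ 2 := by
  have halt : ∀ i, (hi : i + 1 < L.length) → (L[i+1]).1 = !(L[i]'(by omega)).1 :=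
    fun i hi => (hL.2.2.1 i hi).1
  have hcard : (lineF L b).card ≤ (L.filter (fun bl => bl.1 == b)).length := by
    refine le_trans (List.toFinset_card_le _) ?_
    rw [List.length_map]
  rcases L with - | ⟨x, L⟩
  · simp [lineF]
  rcases L with - | ⟨y, L⟩
  · refine le_trans hcard ?_
    simp [List.filter_cons]
    split <;> simp
  rcases L with - | ⟨z, L⟩
  · refine le_trans hcard (le_trans (List.length_filter_le _ _) (by simp))
  have hL0 : L = [] := by
    simp only [List.length_cons] at h3
    rw [← List.length_eq_zero_iff]
    omega
  subst hL0
  have e1 : y.1 = !x.1 := by simpa using halt 0 (by simp)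
  have e2 : z.1 = !y.1 := by simpa using halt 1 (by simp)
  refine le_trans hcard ?_
  obtain ⟨x1, x2⟩ := x
  obtain ⟨y1, y2⟩ := y
  obtain ⟨z1, z2⟩ := z
  simp only at e1 e2
  subst e1
  subst e2
  cases x1 <;> cases b <;> simp [List.filter_cons]

/-- any edge of the path lies on one of its lines -/
lemma edge_line_mem {Q : GridPath} {L : List (Bool × ℤ × ℤ × ℤ)} (hL : BlocksFor Q L)
    {b : Bool} {c x : ℤ} (he : Ed b c x ∈ Q.edges) : c ∈ lineF L b := by
  obtain ⟨hlen, hseg, -, -⟩ := hL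
  obtain ⟨i, hi, hei⟩ := Q.mem_edges_iff.mp he
  have hi' : i < L.length := by omega
  obtain ⟨x', -, -, hx'⟩ := ((hseg i hi').2 _).mp hei
  obtain ⟨hb, hc, -⟩ := Ed_inj hx'
  exact mem_lineF.mpr ⟨i, hi', hb.symm, hc.symm⟩

/-- for each line, the edges of the path on that line form an interval -/
lemma edge_interval {Q : GridPath} {L : List (Bool × ℤ × ℤ × ℤ)} (hL : BlocksFor Q L)
    (b : Bool) (c : ℤ) :
    ∃ a e2 : ℤ, ∀ x, Ed b c x ∈ Q.edges ↔ (a ≤ x ∧ x < e2) := by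
  classical
  obtain ⟨hlen, hseg, -, huniq⟩ := hL
  by_cases hex : ∃ i, ∃ (hi : i < L.length), (L[i]).1 = b ∧ (L[i]).2.1 = c
  · obtain ⟨i, hi, hib, hic⟩ := hex
    refine ⟨(L[i]).2.2.1, (L[i]).2.2.2, fun x => ⟨?_, ?_⟩⟩
    · intro hx
      obtain ⟨j, hj, hej⟩ := Q.mem_edges_iff.mp hx
      have hj' : j < L.length := by omega
      obtain ⟨x', hx1, hx2, hx'⟩ := ((hseg j hj').2 _).mp hej
      obtain ⟨hb, hc, rfl⟩ := Ed_inj hx'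
      have hij : i = j := by
        by_contra hne
        rcases Nat.lt_or_ge i j with h | h
        · exact huniq i j hj' h (by rw [hib, ← hb]) (by rw [hic, ← hc])
        · have : j < i := by omega
          exact huniq j i hi this (by rw [hib, ← hb]) (by rw [hic, ← hc]) 
      subst hij
      exact ⟨hx1, hx2⟩
    · intro hx
      have : Ed b c x ∈ segEdges Q i := by
        apply ((hseg i hi).2 _).mpr
        exact ⟨x, hx.1, hx.2, by rw [hib, hic]⟩
      exact segEdges_subset (by omega) this
  · refine ⟨0, 0, fun x => ⟨?_, by omega⟩⟩
    intro hx
    exfalso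
    apply hex
    obtain ⟨i, hi, hei⟩ := Q.mem_edges_iff.mp hx
    have hi' : i < L.length := by omega
    obtain ⟨x', -, -, hx'⟩ := ((hseg i hi').2 _).mp hei
    obtain ⟨hb, hc, -⟩ := Ed_inj hx'
    exact ⟨i, hi', hb.symm, hc.symm⟩


/-- tags classifying close realizers -/
abbrev Tag := (Bool × ℤ) ⊕ (Bool × ℤ × ℤ × Bool)

/-- the path `Pw` meets `Pu` and `Pv` on the common line `(b, c)`, covering everything
in between. -/
def CaseA (Pu Pv Pw : GridPath) (b : Bool) (c : ℤ) : Prop :=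
  ∃ x1 x2 : ℤ, Ed b c x1 ∈ Pu.edges ∧ Ed b c x2 ∈ Pv.edges ∧
    ∀ x, min x1 x2 ≤ x → x ≤ max x1 x2 → Ed b c x ∈ Pw.edges

def GoodTag (Pu Pv Pw : GridPath) : Tag → Prop
  | Sum.inl (b, c) => CaseA Pu Pv Pw b c
  | Sum.inr (b, c, c', s) => Ed b c (if s then c' else c' - 1) ∈ Pw.edges

/-- the finite set of available tags -/
def tagSet (Lu Lv : List (Bool × ℤ × ℤ × ℤ)) : Finset Tag :=
  ((lineF Lu true ∩ lineF Lv true).image fun c => Sum.inl (true, c)) ∪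
  ((lineF Lu false ∩ lineF Lv false).image fun c => Sum.inl (false, c)) ∪
  (((lineF Lu true ×ˢ lineF Lv false) ×ˢ (Finset.univ : Finset Bool)).image
      fun p => Sum.inr (true, p.1.1, p.1.2, p.2)) ∪
  (((lineF Lu false ×ˢ lineF Lv true) ×ˢ (Finset.univ : Finset Bool)).image
      fun p => Sum.inr (false, p.1.1, p.1.2, p.2))

lemma mem_tagSet_A {Lu Lv : List (Bool × ℤ × ℤ × ℤ)} {b : Bool} {c : ℤ}
    (h1 : c ∈ lineF Lu b) (h2 : c ∈ lineF Lv b) :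
    (Sum.inl (b, c) : Tag) ∈ tagSet Lu Lv := by
  cases b
  · exact Finset.mem_union_left _ (Finset.mem_union_left _ (Finset.mem_union_right _
      (Finset.mem_image.mpr ⟨c, Finset.mem_inter.mpr ⟨h1, h2⟩, rfl⟩)))
  · exact Finset.mem_union_left _ (Finset.mem_union_left _ (Finset.mem_union_left _
      (Finset.mem_image.mpr ⟨c, Finset.mem_inter.mpr ⟨h1, h2⟩, rfl⟩)))

lemma mem_tagSet_B {Lu Lv : List (Bool × ℤ × ℤ × ℤ)} {b : Bool} {c c' : ℤ} {s : Bool}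
    (h1 : c ∈ lineF Lu b) (h2 : c' ∈ lineF Lv (!b)) :
    (Sum.inr (b, c, c', s) : Tag) ∈ tagSet Lu Lv := by
  cases b
  · refine Finset.mem_union_right _ (Finset.mem_image.mpr ⟨((c, c'), s), ?_, rfl⟩)
    rw [Finset.mem_product, Finset.mem_product]
    exact ⟨⟨h1, h2⟩, Finset.mem_univ _⟩
  · refine Finset.mem_union_left _ (Finset.mem_union_right _
      (Finset.mem_image.mpr ⟨((c, c'), s), ?_, rfl⟩))
    rw [Finset.mem_product, Finset.mem_product]
    exact ⟨⟨h1, h2⟩, Finset.mem_univ _⟩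

lemma tagSet_card {Qu Qv : GridPath} {Lu Lv : List (Bool × ℤ × ℤ × ℤ)}
    (hLu : BlocksFor Qu Lu) (hLv : BlocksFor Qv Lv)
    (h3u : Lu.length ≤ 3) (h3v : Lv.length ≤ 3) :
    (tagSet Lu Lv).card ≤ 12 := by
  have hu2 : (lineF Lu true).card ≤ 2 := lineF_card_le_two hLu h3u true
  have vu2 : (lineF Lu false).card ≤ 2 := lineF_card_le_two hLu h3u false
  have hv2 : (lineF Lv true).card ≤ 2 := lineF_card_le_two hLv h3v true
  have vv2 : (lineF Lv false).card ≤ 2 := lineF_card_le_two hLv h3v false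
  have hsu : (lineF Lu true).card + (lineF Lu false).card ≤ 3 :=
    le_trans lineF_card_sum h3u
  have hsv : (lineF Lv true).card + (lineF Lv false).card ≤ 3 :=
    le_trans lineF_card_sum h3v
  have c1 : ((lineF Lu true ∩ lineF Lv true).image fun c => (Sum.inl (true, c) : Tag)).card
      ≤ (lineF Lu true ∩ lineF Lv true).card := Finset.card_image_le
  have c2 : ((lineF Lu false ∩ lineF Lv false).image fun c => (Sum.inl (false, c) : Tag)).card
      ≤ (lineF Lu false ∩ lineF Lv false).card := Finset.card_image_le
  have c3 : ((((lineF Lu true ×ˢ lineF Lv false) ×ˢ (Finset.univ : Finset Bool)).image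
      fun p => (Sum.inr (true, p.1.1, p.1.2, p.2) : Tag)).card)
      ≤ (lineF Lu true).card * (lineF Lv false).card * 2 := by
    refine le_trans Finset.card_image_le ?_
    rw [Finset.card_product, Finset.card_product]
    simp
  have c4 : ((((lineF Lu false ×ˢ lineF Lv true) ×ˢ (Finset.univ : Finset Bool)).image
      fun p => (Sum.inr (false, p.1.1, p.1.2, p.2) : Tag)).card)
      ≤ (lineF Lu false).card * (lineF Lv true).card * 2 := by
    refine le_trans Finset.card_image_le ?_
    rw [Finset.card_product, Finset.card_product]
    simp
  have i1 : (lineF Lu true ∩ lineF Lv true).card ≤ (lineF Lu true).card :=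
    Finset.card_le_card (Finset.inter_subset_left)
  have i1' : (lineF Lu true ∩ lineF Lv true).card ≤ (lineF Lv true).card :=
    Finset.card_le_card (Finset.inter_subset_right)
  have i2 : (lineF Lu false ∩ lineF Lv false).card ≤ (lineF Lu false).card :=
    Finset.card_le_card (Finset.inter_subset_left)
  have i2' : (lineF Lu false ∩ lineF Lv false).card ≤ (lineF Lv false).card :=
    Finset.card_le_card (Finset.inter_subset_right)
  have hun : (tagSet Lu Lv).card ≤
      (lineF Lu true ∩ lineF Lv true).card + (lineF Lu false ∩ lineF Lv false).card
      + (lineF Lu true).card * (lineF Lv false).card * 2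
      + (lineF Lu false).card * (lineF Lv true).card * 2 := by
    rw [tagSet]
    refine le_trans (Finset.card_union_le _ _) ?_
    have := Finset.card_union_le
      (((lineF Lu true ∩ lineF Lv true).image fun c => (Sum.inl (true, c) : Tag)) ∪
        ((lineF Lu false ∩ lineF Lv false).image fun c => (Sum.inl (false, c) : Tag)))
      (((lineF Lu true ×ˢ lineF Lv false) ×ˢ (Finset.univ : Finset Bool)).image
        fun p => (Sum.inr (true, p.1.1, p.1.2, p.2) : Tag))
    have h2 := Finset.card_union_le
      ((lineF Lu true ∩ lineF Lv true).image fun c => (Sum.inl (true, c) : Tag))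
      ((lineF Lu false ∩ lineF Lv false).image fun c => (Sum.inl (false, c) : Tag))
    omega
  set a := (lineF Lu true).card with ha
  set bb := (lineF Lu false).card with hb
  set cc := (lineF Lv true).card with hc
  set d := (lineF Lv false).card with hd
  set m1 := (lineF Lu true ∩ lineF Lv true).card
  set m2 := (lineF Lu false ∩ lineF Lv false).card
  interval_cases a <;> interval_cases bb <;> interval_cases cc <;> interval_cases d <;> omega

/-- two distinct non-adjacent paths cannot carry the same good tag -/
lemma good_tag_inj {Pu Pv Pw Pw' : GridPath}
    (hUV : ∀ e, ¬(e ∈ Pu.edges ∧ e ∈ Pv.edges))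
    (hWW : ∀ e, ¬(e ∈ Pw.edges ∧ e ∈ Pw'.edges))
    (hintu : ∀ b c, ∃ a e2 : ℤ, ∀ x, Ed b c x ∈ Pu.edges ↔ (a ≤ x ∧ x < e2))
    (hintv : ∀ b c, ∃ a e2 : ℤ, ∀ x, Ed b c x ∈ Pv.edges ↔ (a ≤ x ∧ x < e2))
    (t : Tag) (h : GoodTag Pu Pv Pw t) (h' : GoodTag Pu Pv Pw' t) : False := by
  match t with
  | Sum.inr (b, c, c', s) =>
    exact hWW _ ⟨h, h'⟩
  | Sum.inl (b, c) =>
    obtain ⟨au, eu, hu⟩ := hintu b c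
    obtain ⟨av, ev, hv⟩ := hintv b c
    obtain ⟨x1, x2, hx1, hx2, hcov⟩ := h
    obtain ⟨y1, y2, hy1, hy2, hcov'⟩ := h'
    rw [hu] at hx1 hy1
    rw [hv] at hx2 hy2
    have hgap : eu ≤ av ∨ ev ≤ au := by
      by_contra hcon
      push_neg at hcon
      refine hUV (Ed b c (max au av)) ⟨?_, ?_⟩
      · rw [hu]; omega
      · rw [hv]; omega
    rcases hgap with hgap | hgap
    · refine hWW (Ed b c (eu - 1)) ⟨?_, ?_⟩
      · exact hcov _ (by omega) (by omega)
      · exact hcov' _ (by omega) (by omega)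
    · refine hWW (Ed b c (ev - 1)) ⟨?_, ?_⟩
      · exact hcov _ (by omega) (by omega)
      · exact hcov' _ (by omega) (by omega)


/-- every close realizer carries a good tag from the tag set -/
lemma main_tag {Pu Pv Pw : GridPath} {Lu Lv : List (Bool × ℤ × ℤ × ℤ)}
    (hLu : BlocksFor Pu Lu) (hLv : BlocksFor Pv Lv) (hbw : Pw.bends ≤ 2)
    (hreal : RealizesOnCloseSegments Pw Pu Pv)
    (hx : ∃ e, e ∈ Pu.edges ∧ e ∈ Pw.edges)
    (hy : ∃ e, e ∈ Pv.edges ∧ e ∈ Pw.edges) :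
    ∃ t ∈ tagSet Lu Lv, GoodTag Pu Pv Pw t := by
  obtain ⟨i, j, hi, hj, hadj, hall⟩ := hreal
  obtain ⟨Lw, hLw, -⟩ := blocks_exist Pw hbw
  obtain ⟨hlen, hseg, hpair, -⟩ := hLw
  obtain ⟨eu, heuU, heuW⟩ := hx
  obtain ⟨ev, hevV, hevW⟩ := hy
  have hiu := hall eu heuW (Or.inl heuU)
  have hiv := hall ev hevW (Or.inr hevV)
  have caseA : ∀ k, k < Pw.segs.length → eu ∈ segEdges Pw k → ev ∈ segEdges Pw k →
      ∃ t ∈ tagSet Lu Lv, GoodTag Pu Pv Pw t := by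
    intro k hk hek hek'
    have hk' : k < Lw.length := by omega
    obtain ⟨hbound, hiff⟩ := hseg k hk'
    obtain ⟨x1, ha1, hb1, hx1e⟩ := (hiff eu).mp hek
    obtain ⟨x2, ha2, hb2, hx2e⟩ := (hiff ev).mp hek'
    have hcu : (Lw[k]).2.1 ∈ lineF Lu (Lw[k]).1 := edge_line_mem hLu (hx1e ▸ heuU)
    have hcv : (Lw[k]).2.1 ∈ lineF Lv (Lw[k]).1 := edge_line_mem hLv (hx2e ▸ hevV)
    refine ⟨Sum.inl ((Lw[k]).1, (Lw[k]).2.1), mem_tagSet_A hcu hcv, ?_⟩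
    refine ⟨x1, x2, hx1e ▸ heuU, hx2e ▸ hevV, ?_⟩
    intro x hminx hmaxx
    have hxseg : Ed (Lw[k]).1 (Lw[k]).2.1 x ∈ segEdges Pw k :=
      (hiff _).mpr ⟨x, by omega, by omega, rfl⟩
    exact segEdges_subset hk hxseg
  have caseB : ∀ m, m + 1 < Pw.segs.length →
      ((eu ∈ segEdges Pw m ∧ ev ∈ segEdges Pw (m+1)) ∨
        (eu ∈ segEdges Pw (m+1) ∧ ev ∈ segEdges Pw m)) →
      ∃ t ∈ tagSet Lu Lv, GoodTag Pu Pv Pw t := by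
    intro m hm hcase
    have hm' : m + 1 < Lw.length := by omega
    obtain ⟨hbd1, hiff1⟩ := hseg m (by omega)
    obtain ⟨hbd2, hiff2⟩ := hseg (m+1) hm'
    obtain ⟨halt, hchlo, hchhi⟩ := hpair m hm'
    rcases hcase with ⟨heu', hev'⟩ | ⟨heu', hev'⟩
    · obtain ⟨x1, -, -, hx1e⟩ := (hiff1 eu).mp heu'
      obtain ⟨x2, -, -, hx2e⟩ := (hiff2 ev).mp hev'
      have hcu : (Lw[m]'(by omega)).2.1 ∈ lineF Lu (Lw[m]'(by omega)).1 :=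
        edge_line_mem hLu (hx1e ▸ heuU)
      have hcv : (Lw[m+1]).2.1 ∈ lineF Lv (!(Lw[m]'(by omega)).1) := by
        have h0 := edge_line_mem hLv (hx2e ▸ hevV)
        rwa [halt] at h0
      rcases hchlo with hch | hch
      · exact ⟨Sum.inr (_, _, _, true), mem_tagSet_B hcu hcv, by simpa [GoodTag] using hch⟩
      · exact ⟨Sum.inr (_, _, _, false), mem_tagSet_B hcu hcv, by simpa [GoodTag] using hch⟩
    · obtain ⟨x1, -, -, hx1e⟩ := (hiff2 eu).mp heu'
      obtain ⟨x2, -, -, hx2e⟩ := (hiff1 ev).mp hev'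
      have hcu : (Lw[m+1]).2.1 ∈ lineF Lu (Lw[m+1]).1 := edge_line_mem hLu (hx1e ▸ heuU)
      have hcv : (Lw[m]'(by omega)).2.1 ∈ lineF Lv (!(Lw[m+1]).1) := by
        have h0 := edge_line_mem hLv (hx2e ▸ hevV)
        have hbneg : (Lw[m]'(by omega)).1 = !(Lw[m+1]).1 := by
          rw [halt]
          cases ((Lw[m]'(by omega)).1) <;> simp
        rwa [hbneg] at h0
      rcases hchhi with hch | hch
      · exact ⟨Sum.inr (_, _, _, true), mem_tagSet_B hcu hcv, by simpa [GoodTag] using hch⟩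
      · exact ⟨Sum.inr (_, _, _, false), mem_tagSet_B hcu hcv, by simpa [GoodTag] using hch⟩
  rcases hiu with hu1 | hu1 <;> rcases hiv with hv1 | hv1
  · exact caseA i hi hu1 hv1
  · rcases hadj with rfl | rfl | rfl
    · exact caseA i hi hu1 hv1
    · exact caseB i (by omega) (Or.inl ⟨hu1, hv1⟩)
    · exact caseB j (by omega) (Or.inr ⟨hu1, hv1⟩)
  · rcases hadj with rfl | rfl | rfl
    · exact caseA i hi hu1 hv1
    · exact caseB i (by omega) (Or.inr ⟨hu1, hv1⟩)
    · exact caseB j (by omega) (Or.inl ⟨hu1, hv1⟩)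
  · exact caseA j hj hu1 hv1

/-- In any 2-bend EPG representation of `K_{2,n}`, at most 12 vertices of the `n`-class
realize both of their edges on the same or two consecutive segments of their path. -/
theorem K2n_few_close_realizers (n : ℕ)
    (P : (Fin 2) ⊕ (Fin n) → GridPath)
    (hrep : IsEPGRep (completeBipartiteGraph (Fin 2) (Fin n)) P)
    (hbend : ∀ x, (P x).bends ≤ 2) :
    {w : Fin n |
        RealizesOnCloseSegments (P (Sum.inr w)) (P (Sum.inl 0)) (P (Sum.inl 1))}.ncard
      ≤ 12 := by
  classical
  obtain ⟨Lu, hLu, hLu3⟩ := blocks_exist (P (Sum.inl 0)) (hbend _)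
  obtain ⟨Lv, hLv, hLv3⟩ := blocks_exist (P (Sum.inl 1)) (hbend _)
  set S : Set (Fin n) :=
    {w | RealizesOnCloseSegments (P (Sum.inr w)) (P (Sum.inl 0)) (P (Sum.inl 1))} with hS
  have hUV : ∀ e, ¬(e ∈ (P (Sum.inl 0)).edges ∧ e ∈ (P (Sum.inl 1)).edges) := by
    intro e he
    have h01 : (Sum.inl 0 : Fin 2 ⊕ Fin n) ≠ Sum.inl 1 := by
      intro h
      have : (0 : Fin 2) = 1 := Sum.inl_injective h
      exact absurd this (by decide)
    have := (hrep _ _ h01).mpr ⟨e, he.1, he.2⟩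
    simp [completeBipartiteGraph] at this
  have key : ∀ w : Fin n, w ∈ S →
      ∃ t ∈ tagSet Lu Lv, GoodTag (P (Sum.inl 0)) (P (Sum.inl 1)) (P (Sum.inr w)) t := by
    intro w hw
    have hne1 : (Sum.inl 0 : Fin 2 ⊕ Fin n) ≠ Sum.inr w := by simp
    have hne2 : (Sum.inl 1 : Fin 2 ⊕ Fin n) ≠ Sum.inr w := by simp
    have hadj1 : (completeBipartiteGraph (Fin 2) (Fin n)).Adj (Sum.inl 0) (Sum.inr w) := by
      simp [completeBipartiteGraph]
    have hadj2 : (completeBipartiteGraph (Fin 2) (Fin n)).Adj (Sum.inl 1) (Sum.inr w) := by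
      simp [completeBipartiteGraph]
    exact main_tag hLu hLv (hbend _) hw ((hrep _ _ hne1).mp hadj1) ((hrep _ _ hne2).mp hadj2)
  let F : Fin n → Tag := fun w => if h : w ∈ S then (key w h).choose else Sum.inl (true, 0)
  have hFmem : ∀ w ∈ S, F w ∈ tagSet Lu Lv := by
    intro w hw
    simp only [F, dif_pos hw]
    exact (key w hw).choose_spec.1
  have hFgood : ∀ w (hw : w ∈ S),
      GoodTag (P (Sum.inl 0)) (P (Sum.inl 1)) (P (Sum.inr w)) (F w) := by
    intro w hw
    simp only [F, dif_pos hw]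
    exact (key w hw).choose_spec.2
  have hinj : Set.InjOn F S := by
    intro w hw w' hw' heq
    by_contra hne
    have hWW : ∀ e, ¬(e ∈ (P (Sum.inr w)).edges ∧ e ∈ (P (Sum.inr w')).edges) := by
      intro e he
      have hne' : (Sum.inr w : Fin 2 ⊕ Fin n) ≠ Sum.inr w' := by simpa using hne
      have := (hrep _ _ hne').mpr ⟨e, he.1, he.2⟩
      simp [completeBipartiteGraph] at this
    have hg' : GoodTag (P (Sum.inl 0)) (P (Sum.inl 1)) (P (Sum.inr w')) (F w) := by
      rw [heq]
      exact hFgood w' hw'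
    exact good_tag_inj hUV hWW (edge_interval hLu) (edge_interval hLv) (F w)
      (hFgood w hw) hg'
  have h1 : S.ncard = (F '' S).ncard := (Set.ncard_image_of_injOn hinj).symm
  have h2 : (F '' S).ncard ≤ ((tagSet Lu Lv : Finset Tag) : Set Tag).ncard := by
    apply Set.ncard_le_ncard
    · rintro t ⟨w, hw, rfl⟩
      exact hFmem w hw
    · exact (tagSet Lu Lv).finite_toSet
  have h3 : ((tagSet Lu Lv : Finset Tag) : Set Tag).ncard = (tagSet Lu Lv).card :=
    Set.ncard_coe_finset _
  have h4 := tagSet_card hLu hLv hLu3 hLv3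
  omega
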